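/- Let A ∈ F^{n×n} with zero forcing set Z of size k and core matrix B ∈ F^{k×k}. Then rank(A) = (n − k) + rank(B). -/

import Mathlib

open Matrix

section ZeroForcing

variable {V : Type*}

/-- The blue-coloring closure of the zero forcing process on a directed graph with
edge relation `E`, starting from the initially blue set `Z`:  a blue vertex `u` all of
whose out-neighbors except `v` are already blue forces `v` to become blue. -/
inductive Blue (E : V → V → Prop) (Z : Set V) : V → Prop
  | init {v : V} : v ∈ Z → Blue E Z v
  | force {u v : V} : Blue E Z u → E u v →
      (∀ w, E u w → w ≠ v → Blue E Z w) → Blue E Z v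

/-- `Z` is a zero forcing set if the forcing process colors every vertex blue. -/
def IsZeroForcingSet (E : V → V → Prop) (Z : Set V) : Prop := ∀ v, Blue E Z v

end ZeroForcing

section ForcingAlg

variable {F : Type*} [Field F] {n : ℕ}

/-- The off-diagonal adjacency pattern of a matrix: `u → v` iff `u ≠ v` and `A u v ≠ 0`. -/
def adjOf (A : Matrix (Fin n) (Fin n) F) (u v : Fin n) : Prop := u ≠ v ∧ A u v ≠ 0

/-- A chronological list of forces for the zero forcing set `Z` of `A`:  `π` lists the
vertices outside `Z` in the order they are forced, and `par u` is the forcing parent of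
`u` (the vertex that forces `u`). -/
structure ForcingOrder (A : Matrix (Fin n) (Fin n) F) (Z : Finset (Fin n)) where
  π : List (Fin n)
  par : Fin n → Fin n
  nodup : π.Nodup
  mem_iff : ∀ v, v ∈ π ↔ v ∉ Z
  par_ne_self : ∀ u ∈ π, par u ≠ u
  par_edge : ∀ u ∈ π, A (par u) u ≠ 0
  par_blue : ∀ u ∈ π, par u ∈ Z ∨ (par u ∈ π ∧ π.idxOf (par u) < π.idxOf u)
  others_blue : ∀ u ∈ π, ∀ w, w ≠ par u → w ≠ u → A (par u) w ≠ 0 →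
      (w ∈ Z ∨ (w ∈ π ∧ π.idxOf w < π.idxOf u))
  par_inj : ∀ u ∈ π, ∀ v ∈ π, par u = par v → u = v

/-- One step of the forcing algorithm: `x_u ← (b_{u↑} − A_{u↑,*} x) / A_{u↑,u}`. -/
def forcingStep (A : Matrix (Fin n) (Fin n) F) (par : Fin n → Fin n)
    (b : Fin n → F) (x : Fin n → F) (u : Fin n) : Fin n → F :=
  Function.update x u ((b (par u) - A (par u) ⬝ᵥ x) / A (par u) u)

/-- The forcing algorithm `Forcing(A, Z, b)`: starting from `x = 0`, iterate the forcing
update over the vertices outside `Z` in forcing order. -/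
def Forcing (A : Matrix (Fin n) (Fin n) F) {Z : Finset (Fin n)}
    (fo : ForcingOrder A Z) (b : Fin n → F) : Fin n → F :=
  fo.π.foldl (forcingStep A fo.par b) 0

/-- The map `R(b) = b − A · Forcing(A, Z, b)`. -/
def Rmap (A : Matrix (Fin n) (Fin n) F) {Z : Finset (Fin n)}
    (fo : ForcingOrder A Z) (b : Fin n → F) : Fin n → F :=
  b - A.mulVec (Forcing A fo b)

/-- A vertex is a terminal if it has no forcing child. -/
def IsTerminal {A : Matrix (Fin n) (Fin n) F} {Z : Finset (Fin n)}
    (fo : ForcingOrder A Z) (v : Fin n) : Prop :=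
  ∀ u ∈ fo.π, fo.par u ≠ v

instance {A : Matrix (Fin n) (Fin n) F} {Z : Finset (Fin n)} (fo : ForcingOrder A Z) :
    DecidablePred (IsTerminal fo) := fun v =>
  decidable_of_iff (∀ u ∈ fo.π, fo.par u ≠ v) Iff.rfl

/-- The core matrix `B = (R A)_{T,Z}`: its column indexed by `z ∈ Z` is `(R a_z)_T`,
where `a_z` is the `z`-th column of `A` and `T` is the terminal set. -/
def coreMatrix (A : Matrix (Fin n) (Fin n) F) {Z : Finset (Fin n)}
    (fo : ForcingOrder A Z) :
    Matrix {v // IsTerminal fo v} {v // v ∈ Z} F :=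
  Matrix.of fun t z => Rmap A fo (fun i => A i z.1) t.1

end ForcingAlg


section Aux

variable {F : Type*} [Field F] {n : ℕ} (A : Matrix (Fin n) (Fin n) F) {Z : Finset (Fin n)}
  (fo : ForcingOrder A Z)

/-- Stability: foldl of forcing steps doesn't change entries not in the list. -/
lemma foldl_forcingStep_of_not_mem (b : Fin n → F) :
    ∀ (l : List (Fin n)) (x : Fin n → F) {v : Fin n}, v ∉ l →
      (l.foldl (forcingStep A fo.par b) x) v = x v := by
  intro l
  induction l with
  | nil => intro x v _; rfl
  | cons u l ih =>
    intro x v hv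
    simp only [List.mem_cons, not_or] at hv
    rw [List.foldl_cons, ih _ hv.2, forcingStep, Function.update_of_ne hv.1]

lemma forcing_eq_zero_of_not_mem (b : Fin n → F) {v : Fin n} (hv : v ∉ fo.π) :
    Forcing A fo b v = 0 :=
  foldl_forcingStep_of_not_mem A fo b fo.π 0 hv

lemma forcingStep_add (b₁ b₂ x y : Fin n → F) (u : Fin n) :
    forcingStep A fo.par (b₁ + b₂) (x + y) u =
      forcingStep A fo.par b₁ x u + forcingStep A fo.par b₂ y u := by
  funext w
  by_cases hw : w = u
  · subst hw
    simp [forcingStep, dotProduct_add, add_div, sub_div, Function.update_self]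
    ring
  · simp [forcingStep, Function.update_of_ne hw]

lemma forcingStep_smul (c : F) (b x : Fin n → F) (u : Fin n) :
    forcingStep A fo.par (c • b) (c • x) u = c • forcingStep A fo.par b x u := by
  funext w
  by_cases hw : w = u
  · subst hw
    simp only [forcingStep, Pi.smul_apply, dotProduct_smul, smul_eq_mul,
      Function.update_self]
    rw [← mul_sub, mul_div_assoc]
  · simp [forcingStep, Function.update_of_ne hw]

lemma foldl_forcingStep_add (b₁ b₂ : Fin n → F) :
    ∀ (l : List (Fin n)) (x y : Fin n → F),
      l.foldl (forcingStep A fo.par (b₁ + b₂)) (x + y) =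
        l.foldl (forcingStep A fo.par b₁) x + l.foldl (forcingStep A fo.par b₂) y := by
  intro l
  induction l with
  | nil => intro x y; rfl
  | cons u l ih =>
    intro x y
    simp only [List.foldl_cons, forcingStep_add A fo b₁ b₂ x y u, ih]

lemma foldl_forcingStep_smul (c : F) (b : Fin n → F) :
    ∀ (l : List (Fin n)) (x : Fin n → F),
      l.foldl (forcingStep A fo.par (c • b)) (c • x) =
        c • l.foldl (forcingStep A fo.par b) x := by
  intro l
  induction l with
  | nil => intro x; rfl
  | cons u l ih =>
    intro x
    simp only [List.foldl_cons, forcingStep_smul A fo c b x u, ih]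

/-- The forcing algorithm as a linear map in `b`. -/
noncomputable def ForcingL : (Fin n → F) →ₗ[F] (Fin n → F) where
  toFun := Forcing A fo
  map_add' b₁ b₂ := by
    have := foldl_forcingStep_add A fo b₁ b₂ fo.π 0 0
    simpa [Forcing] using this
  map_smul' c b := by
    have := foldl_forcingStep_smul A fo c b fo.π 0
    simpa [Forcing] using this

/-- The map `R` as a linear map. -/
noncomputable def RmapL : (Fin n → F) →ₗ[F] (Fin n → F) :=
  LinearMap.id - A.mulVecLin ∘ₗ ForcingL A fo

lemma RmapL_apply (b : Fin n → F) : RmapL A fo b = Rmap A fo b := rfl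

lemma mem_prefix_of_indexOf_lt {l p q : List (Fin n)} {u : Fin n}
    (hnd : l.Nodup) (hl : l = p ++ u :: q) {w : Fin n} (hw : w ∈ l)
    (hlt : l.idxOf w < l.idxOf u) : w ∈ p := by
  subst hl
  have hup : u ∉ p := by
    have := List.disjoint_of_nodup_append hnd
    intro hup
    exact (this hup) (List.mem_cons_self)
  by_contra hwp
  have hwuq : w ∈ u :: q := by
    rcases List.mem_append.mp hw with h | h
    · exact absurd h hwp
    · exact h
  have hiu : (p ++ u :: q).idxOf u = p.length := by
    rw [List.idxOf_append_of_notMem hup, List.idxOf_cons_self, Nat.add_zero]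
  have hiw : p.length ≤ (p ++ u :: q).idxOf w := by
    rw [List.idxOf_append_of_notMem hwp]
    exact Nat.le_add_right _ _
  omega

/-- A vertex that is "blue before `u`" keeps, in the final vector, the value it had
just before `u` was processed. -/
lemma forcing_apply_of_blue (b : Fin n → F) {u : Fin n} {p q : List (Fin n)}
    (hsplit : fo.π = p ++ u :: q) {w : Fin n}
    (hw : w ∈ Z ∨ (w ∈ fo.π ∧ fo.π.idxOf w < fo.π.idxOf u)) :
    Forcing A fo b w = p.foldl (forcingStep A fo.par b) 0 w := by
  have hwuq : w ∉ u :: q := by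
    rcases hw with hw | ⟨hwπ, hlt⟩
    · intro hmem
      have : w ∈ fo.π := by rw [hsplit]; exact List.mem_append_right _ hmem
      exact ((fo.mem_iff w).mp this) hw
    · have hwp : w ∈ p := mem_prefix_of_indexOf_lt fo.nodup hsplit hwπ hlt
      have hnd := fo.nodup
      rw [hsplit] at hnd
      intro hmem
      exact (List.disjoint_of_nodup_append hnd) hwp hmem
  rw [Forcing, hsplit, List.foldl_append]
  exact foldl_forcingStep_of_not_mem A fo b _ _ hwuq

lemma forcing_apply_split (b : Fin n → F) {u : Fin n} {p q : List (Fin n)}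
    (hsplit : fo.π = p ++ u :: q) :
    Forcing A fo b u =
      (b (fo.par u) - A (fo.par u) ⬝ᵥ p.foldl (forcingStep A fo.par b) 0) /
        A (fo.par u) u := by
  have huq : u ∉ q := by
    have hnd := fo.nodup
    rw [hsplit] at hnd
    exact (List.nodup_cons.mp (List.Nodup.of_append_right hnd)).1
  rw [Forcing, hsplit, List.foldl_append, List.foldl_cons,
    foldl_forcingStep_of_not_mem A fo b q _ huq, forcingStep, Function.update_self]

lemma foldl_prefix_self (b : Fin n → F) {u : Fin n} {p q : List (Fin n)}
    (hsplit : fo.π = p ++ u :: q) :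
    p.foldl (forcingStep A fo.par b) 0 u = 0 := by
  have hup : u ∉ p := by
    have hnd := fo.nodup
    rw [hsplit] at hnd
    intro hup
    exact (List.disjoint_of_nodup_append hnd hup) (List.mem_cons_self)
  rw [foldl_forcingStep_of_not_mem A fo b p 0 hup]; rfl

/-- Row satisfaction: for every forced vertex `u`, the row of its parent is satisfied
by the final forcing vector. -/
lemma row_eq (b : Fin n → F) {u : Fin n} (hu : u ∈ fo.π) :
    A (fo.par u) ⬝ᵥ Forcing A fo b = b (fo.par u) := by
  obtain ⟨p, q, hsplit⟩ := List.append_of_mem hu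
  set xp := p.foldl (forcingStep A fo.par b) 0 with hxp
  have hA : A (fo.par u) u ≠ 0 := fo.par_edge u hu
  have hkey : ∀ w, w ≠ u → A (fo.par u) w * Forcing A fo b w = A (fo.par u) w * xp w := by
    intro w hwne
    by_cases hAw : A (fo.par u) w = 0
    · rw [hAw, zero_mul, zero_mul]
    · have hblue : w ∈ Z ∨ (w ∈ fo.π ∧ fo.π.idxOf w < fo.π.idxOf u) := by
        by_cases hwpar : w = fo.par u
        · subst hwpar
          exact fo.par_blue u hu
        · exact fo.others_blue u hu w hwpar hwne hAw
      rw [forcing_apply_of_blue A fo b hsplit hblue]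
  have hsum : ∀ f g : Fin n → F, (∀ w, w ≠ u → f w = g w) →
      (∑ w, f w) = (∑ w ∈ Finset.univ.erase u, g w) + f u := by
    intro f g hfg
    rw [← Finset.sum_erase_add Finset.univ f (Finset.mem_univ u)]
    congr 1
    exact Finset.sum_congr rfl fun w hw => hfg w (Finset.ne_of_mem_erase hw)
  have h1 : A (fo.par u) ⬝ᵥ Forcing A fo b =
      (∑ w ∈ Finset.univ.erase u, A (fo.par u) w * xp w) +
        A (fo.par u) u * Forcing A fo b u :=
    hsum _ _ hkey
  have h2 : A (fo.par u) ⬝ᵥ xp =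
      (∑ w ∈ Finset.univ.erase u, A (fo.par u) w * xp w) + A (fo.par u) u * xp u :=
    hsum _ _ fun w _ => rfl
  have hzp : xp u = 0 := foldl_prefix_self A fo b hsplit
  rw [hzp, mul_zero, add_zero] at h2
  rw [h1, ← h2, forcing_apply_split A fo b hsplit, ← hxp,
    mul_div_cancel₀ _ hA]
  ring

/-- The forcing algorithm recovers a vector supported outside `Z` from its image. -/
lemma forcing_mulVec (x₀ : Fin n → F) (hx₀ : ∀ v ∈ Z, x₀ v = 0) :
    Forcing A fo (A.mulVec x₀) = x₀ := by
  set b := A.mulVec x₀ with hb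
  have key : ∀ N : ℕ, ∀ v ∈ fo.π, fo.π.idxOf v < N → Forcing A fo b v = x₀ v := by
    intro N
    induction N with
    | zero => intro v _ h; omega
    | succ N ih =>
      intro v hv hvN
      obtain ⟨p, q, hsplit⟩ := List.append_of_mem hv
      set xp := p.foldl (forcingStep A fo.par b) 0 with hxp
      have hA : A (fo.par v) v ≠ 0 := fo.par_edge v hv
      have hiv : fo.π.idxOf v ≤ N := by omega
      have hkey : ∀ w, w ≠ v → A (fo.par v) w * xp w = A (fo.par v) w * x₀ w := by
        intro w hwne
        by_cases hAw : A (fo.par v) w = 0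
        · rw [hAw, zero_mul, zero_mul]
        · have hblue : w ∈ Z ∨ (w ∈ fo.π ∧ fo.π.idxOf w < fo.π.idxOf v) := by
            by_cases hwpar : w = fo.par v
            · subst hwpar
              exact fo.par_blue v hv
            · exact fo.others_blue v hv w hwpar hwne hAw
          have hxw : Forcing A fo b w = xp w := forcing_apply_of_blue A fo b hsplit hblue
          rcases hblue with hwZ | ⟨hwπ, hlt⟩
          · have h1 : xp w = 0 := by
              rw [← hxw]; exact forcing_eq_zero_of_not_mem A fo b
                (fun h => (fo.mem_iff w).mp h hwZ)
            rw [h1, hx₀ w hwZ]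
          · have h2 : Forcing A fo b w = x₀ w := ih w hwπ (by omega)
            rw [← hxw, h2]
      have hsum : ∀ f g : Fin n → F, (∀ w, w ≠ v → f w = g w) →
          (∑ w, f w) = (∑ w ∈ Finset.univ.erase v, g w) + f v := by
        intro f g hfg
        rw [← Finset.sum_erase_add Finset.univ f (Finset.mem_univ v)]
        congr 1
        exact Finset.sum_congr rfl fun w hw => hfg w (Finset.ne_of_mem_erase hw)
      have h1 : A (fo.par v) ⬝ᵥ xp =
          (∑ w ∈ Finset.univ.erase v, A (fo.par v) w * x₀ w) + A (fo.par v) v * xp v :=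
        hsum _ _ hkey
      have h2 : A (fo.par v) ⬝ᵥ x₀ =
          (∑ w ∈ Finset.univ.erase v, A (fo.par v) w * x₀ w) + A (fo.par v) v * x₀ v :=
        hsum _ _ fun w _ => rfl
      have hzp : xp v = 0 := foldl_prefix_self A fo b hsplit
      rw [hzp] at h1
      have hbv : b (fo.par v) = A (fo.par v) ⬝ᵥ x₀ := rfl
      rw [forcing_apply_split A fo b hsplit, ← hxp, hbv, h1, h2, mul_zero, add_zero]
      field_simp
      ring
  funext v
  by_cases hv : v ∈ fo.π
  · exact key (fo.π.idxOf v + 1) v hv (Nat.lt_succ_self _)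
  · rw [forcing_eq_zero_of_not_mem A fo b hv]
    have : v ∈ Z := by
      by_contra h
      exact hv ((fo.mem_iff v).mpr h)
    exact (hx₀ v this).symm

/-- `R b` vanishes at non-terminal vertices. -/
lemma rmap_eq_zero_of_not_terminal (b : Fin n → F) {v : Fin n}
    (hv : ¬ IsTerminal fo v) : Rmap A fo b v = 0 := by
  simp only [IsTerminal, not_forall] at hv
  obtain ⟨u, hu, hpar⟩ := hv
  push_neg at hpar
  rw [Rmap, Pi.sub_apply, Matrix.mulVec, ← hpar, row_eq A fo b hu, sub_self]

lemma rmapL_eq_zero_iff (b : Fin n → F) :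
    RmapL A fo b = 0 ↔ ∃ x₀, (∀ v ∈ Z, x₀ v = 0) ∧ A.mulVec x₀ = b := by
  constructor
  · intro h
    refine ⟨Forcing A fo b, fun v hv => forcing_eq_zero_of_not_mem A fo b
      (fun hm => (fo.mem_iff v).mp hm hv), ?_⟩
    have := congrArg (· + A.mulVec (Forcing A fo b)) h
    simpa [RmapL_apply, Rmap, sub_add_cancel] using this.symm
  · rintro ⟨x₀, hx₀, rfl⟩
    rw [RmapL_apply, Rmap, forcing_mulVec A fo x₀ hx₀, sub_self]

end Aux


section Aux2

variable {F : Type*} [Field F] {n : ℕ}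

lemma pick_sum {p : Fin n → Prop} [DecidablePred p] [Fintype {v // p v}]
    (f : {v // p v} → F) (j : Fin n) :
    (∑ z : {v // p v}, if z.1 = j then f z else 0) = if hj : p j then f ⟨j, hj⟩ else 0 := by
  split_ifs with hj
  · rw [Finset.sum_eq_single ⟨j, hj⟩]
    · simp
    · intro z _ hz
      rw [if_neg]
      intro h
      exact hz (Subtype.ext h)
    · intro h
      exact absurd (Finset.mem_univ _) h
  · apply Finset.sum_eq_zero
    intro z _
    rw [if_neg]
    intro h
    exact hj (h ▸ z.2)

variable (A : Matrix (Fin n) (Fin n) F) {Z : Finset (Fin n)} (fo : ForcingOrder A Z)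

/-- The full matrix `R A`. -/
noncomputable def RAmat : Matrix (Fin n) (Fin n) F :=
  Matrix.of fun i j => Rmap A fo (fun i' => A i' j) i

lemma RAmat_row_zero {i : Fin n} (hi : ¬ IsTerminal fo i) (j : Fin n) :
    RAmat A fo i j = 0 :=
  rmap_eq_zero_of_not_terminal A fo (fun i' => A i' j) hi

lemma col_eq_mulVec_single (j : Fin n) :
    (fun i => A i j) = A.mulVec (Pi.single j 1) := by
  rw [Matrix.mulVec_single]
  simp
  rfl

lemma RAmat_col_zero {j : Fin n} (hj : j ∉ Z) (i : Fin n) :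
    RAmat A fo i j = 0 := by
  have h0 : RmapL A fo (fun i' => A i' j) = 0 := by
    rw [rmapL_eq_zero_iff]
    refine ⟨Pi.single j 1, fun v hv => ?_, (col_eq_mulVec_single A j).symm⟩
    refine Pi.single_eq_of_ne (fun h => hj ?_) 1
    rw [← h]
    exact hv
  have := congrFun h0 i
  simpa [RmapL_apply, RAmat] using this

lemma RAmat_eq_core {i j : Fin n} (hi : IsTerminal fo i) (hj : j ∈ Z) :
    RAmat A fo i j = coreMatrix A fo ⟨i, hi⟩ ⟨j, hj⟩ := rfl

lemma mulVecLin_RAmat :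
    (RAmat A fo).mulVecLin = (RmapL A fo) ∘ₗ A.mulVecLin := by
  apply LinearMap.pi_ext'
  intro j
  apply LinearMap.ext_ring
  show (RAmat A fo) *ᵥ Pi.single j 1 = RmapL A fo (A *ᵥ Pi.single j 1)
  rw [← col_eq_mulVec_single, ← col_eq_mulVec_single]
  rfl

lemma RAmat_rank_eq_core_rank : (RAmat A fo).rank = (coreMatrix A fo).rank := by
  classical
  set B := coreMatrix A fo with hB
  set M := RAmat A fo with hM
  set P : Matrix (Fin n) {v // IsTerminal fo v} F :=
    Matrix.of fun i t => if t.1 = i then 1 else 0 with hP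
  set Q : Matrix {v // v ∈ Z} (Fin n) F :=
    Matrix.of fun z j => if z.1 = j then 1 else 0 with hQ
  set P' : Matrix {v // IsTerminal fo v} (Fin n) F :=
    Matrix.of fun t i => if t.1 = i then 1 else 0 with hP'
  set Q' : Matrix (Fin n) {v // v ∈ Z} F :=
    Matrix.of fun j z => if z.1 = j then 1 else 0 with hQ'
  have hMPQ : M = P * B * Q := by
    ext i j
    rw [Matrix.mul_apply]
    have h1 : ∀ z : {v // v ∈ Z}, (P * B) i z * Q z j = if z.1 = j then (P * B) i z else 0 := by
      intro z
      by_cases h : z.1 = j <;> simp [hQ, h]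
    rw [Finset.sum_congr rfl fun z _ => h1 z, pick_sum]
    have h2 : ∀ hj : j ∈ Z, (P * B) i (⟨j, hj⟩ : {v // v ∈ Z}) =
        if hi : IsTerminal fo i then B ⟨i, hi⟩ ⟨j, hj⟩ else 0 := by
      intro hj
      rw [Matrix.mul_apply]
      have h3 : ∀ t : {v // IsTerminal fo v}, P i t * B t ⟨j, hj⟩ =
          if t.1 = i then B t ⟨j, hj⟩ else 0 := by
        intro t
        by_cases h : t.1 = i <;> simp [hP, h]
      rw [Finset.sum_congr rfl fun t _ => h3 t, pick_sum]
    split_ifs with hj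
    · rw [h2 hj]
      split_ifs with hi
      · exact RAmat_eq_core A fo hi hj
      · exact RAmat_row_zero A fo hi j
    · exact RAmat_col_zero A fo hj i
  have hBPQ : B = P' * M * Q' := by
    ext t z
    rw [Matrix.mul_apply]
    have h1 : ∀ j, (P' * M) t j * Q' j z = if z.1 = j then (P' * M) t j else 0 := by
      intro j
      by_cases h : z.1 = j <;> simp [hQ', h]
    rw [Finset.sum_congr rfl fun j _ => h1 j, Finset.sum_ite_eq Finset.univ z.1
      (fun j => (P' * M) t j), if_pos (Finset.mem_univ _)]
    rw [Matrix.mul_apply]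
    have h2 : ∀ i, P' t i * M i z.1 = if t.1 = i then M i z.1 else 0 := by
      intro i
      by_cases h : t.1 = i <;> simp [hP', h]
    rw [Finset.sum_congr rfl fun i _ => h2 i, Finset.sum_ite_eq Finset.univ t.1
      (fun i => M i z.1), if_pos (Finset.mem_univ _)]
    exact (RAmat_eq_core A fo t.2 z.2).symm
  apply le_antisymm
  · rw [hMPQ]
    exact le_trans (Matrix.rank_mul_le_left _ _) (Matrix.rank_mul_le_right _ _)
  · conv_lhs => rw [hBPQ]
    exact le_trans (Matrix.rank_mul_le_left _ _) (Matrix.rank_mul_le_right _ _)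

end Aux2

/-- `rank A = (n − k) + rank B`, where `B` is the core matrix of `A`
with respect to a zero forcing set `Z` of size `k`. -/
theorem stmt19 {F : Type*} [Field F] {n : ℕ} (A : Matrix (Fin n) (Fin n) F)
    (Z : Finset (Fin n)) (hZ : IsZeroForcingSet (adjOf A) ↑Z)
    (fo : ForcingOrder A Z) :
    A.rank = (n - Z.card) + (coreMatrix A fo).rank := by
  classical
  set Rl := RmapL A fo with hRl
  set C := LinearMap.range A.mulVecLin with hC
  set φ : C →ₗ[F] (Fin n → F) := Rl ∘ₗ C.subtype with hφ
  have h1 : Module.finrank F (LinearMap.range φ) + Module.finrank F (LinearMap.ker φ)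
      = A.rank := LinearMap.finrank_range_add_finrank_ker φ
  -- the kernel of Rl is contained in the column space
  have hker_le : LinearMap.ker Rl ≤ C := by
    intro b hb
    rw [LinearMap.mem_ker, hRl, rmapL_eq_zero_iff] at hb
    obtain ⟨x₀, _, hx⟩ := hb
    exact ⟨x₀, hx⟩
  have e1 : LinearMap.ker φ ≃ₗ[F] LinearMap.ker Rl := by
    rw [hφ, LinearMap.ker_comp]
    exact Submodule.comapSubtypeEquivOfLe hker_le
  -- identify the kernel of Rl with the image of vectors supported off Z
  have hUmem : ∀ x : Fin n → F,
      x ∈ LinearMap.ker (LinearMap.funLeft F F (Subtype.val : {v // v ∈ Z} → Fin n)) ↔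
        ∀ v ∈ Z, x v = 0 := by
    intro x
    rw [LinearMap.mem_ker, funext_iff]
    constructor
    · intro h v hv
      exact h ⟨v, hv⟩
    · intro h z
      exact h z.1 z.2
  have hkerRl : LinearMap.ker Rl =
      (LinearMap.ker (LinearMap.funLeft F F
        (Subtype.val : {v // v ∈ Z} → Fin n))).map A.mulVecLin := by
    ext b
    rw [LinearMap.mem_ker, hRl, rmapL_eq_zero_iff]
    constructor
    · rintro ⟨x₀, hx1, hx2⟩
      exact ⟨x₀, (hUmem x₀).mpr hx1, hx2⟩
    · rintro ⟨x₀, hx1, hx2⟩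
      exact ⟨x₀, (hUmem x₀).mp hx1, hx2⟩
  have hinj : LinearMap.ker (A.mulVecLin.domRestrict
      (LinearMap.ker (LinearMap.funLeft F F
        (Subtype.val : {v // v ∈ Z} → Fin n)))) = ⊥ := by
    rw [LinearMap.ker_eq_bot']
    intro x hx
    have hx' : A.mulVec x.1 = 0 := hx
    have h2 : Forcing A fo (A.mulVec x.1) = x.1 :=
      forcing_mulVec A fo x.1 (fun v hv => (hUmem x.1).mp x.2 v hv)
    have h3 : x.1 = 0 := by
      rw [← h2, hx']
      exact map_zero (ForcingL A fo)
    exact Subtype.ext h3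
  have hfr_ker : Module.finrank F (LinearMap.ker Rl) =
      Module.finrank F (LinearMap.ker (LinearMap.funLeft F F
        (Subtype.val : {v // v ∈ Z} → Fin n))) := by
    rw [hkerRl, ← LinearMap.range_domRestrict]
    have h := LinearMap.finrank_range_add_finrank_ker (A.mulVecLin.domRestrict
      (LinearMap.ker (LinearMap.funLeft F F
        (Subtype.val : {v // v ∈ Z} → Fin n))))
    rw [hinj, finrank_bot] at h
    omega
  have hfr_U : Module.finrank F (LinearMap.ker (LinearMap.funLeft F F
      (Subtype.val : {v // v ∈ Z} → Fin n))) + Z.card = n := by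
    have h := LinearMap.finrank_range_add_finrank_ker
      (LinearMap.funLeft F F (Subtype.val : {v // v ∈ Z} → Fin n))
    have hsurj : LinearMap.range (LinearMap.funLeft F F
        (Subtype.val : {v // v ∈ Z} → Fin n)) = ⊤ :=
      LinearMap.range_eq_top.mpr
        (LinearMap.funLeft_surjective_of_injective F F _ Subtype.val_injective)
    rw [hsurj, finrank_top, Module.finrank_fintype_fun_eq_card,
      Module.finrank_fintype_fun_eq_card, Fintype.card_coe, Fintype.card_fin] at h
    omega
  -- the range of φ is the column space of R A
  have hrangeφ : LinearMap.range φ = LinearMap.range (RAmat A fo).mulVecLin := by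
    rw [hφ, LinearMap.range_comp, Submodule.range_subtype, mulVecLin_RAmat,
      LinearMap.range_comp, hRl, hC]
  have hfr_range : Module.finrank F (LinearMap.range φ) = (coreMatrix A fo).rank := by
    rw [hrangeφ, ← RAmat_rank_eq_core_rank A fo]
    rfl
  have hZn : Z.card ≤ n := by
    have := Finset.card_le_card (Finset.subset_univ Z)
    simpa using this
  have hA_rank : A.rank = Module.finrank F C := rfl
  rw [← h1, hfr_range, e1.finrank_eq, hfr_ker, Nat.eq_sub_of_add_eq hfr_U,
    Nat.add_comm]
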